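/- Let s > 2 be an integer and let S = { x : x = ∑_{n=1}^∞ α_n / s^{α_1+...+α_n}, α_n ∈ {1,...,s-1} }. Then S is nowhere dense in ℝ. -/

import Mathlib

/-- The set `S` of sums `∑ αₙ / s^(α₁+⋯+αₙ)` over digit sequences with values in `{1,…,s-1}`. -/
def Sset (s : ℕ) : Set ℝ :=
  {x : ℝ | ∃ α : ℕ → ℕ, (∀ n, 1 ≤ α n ∧ α n ≤ s - 1) ∧
    x = ∑' n : ℕ, (α n : ℝ) / (s : ℝ) ^ (∑ k ∈ Finset.range (n + 1), α k)}

open Finset MeasureTheory Set Pointwise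

lemma sum_ge (α : ℕ → ℕ) (hα : ∀ n, 1 ≤ α n) (n : ℕ) :
    n + 1 ≤ ∑ k ∈ Finset.range (n + 1), α k := by
  calc n + 1 = ∑ k ∈ Finset.range (n + 1), 1 := by simp
  _ ≤ _ := Finset.sum_le_sum fun k _ => hα k

lemma term_le (s : ℕ) (hs : 2 < s) (α : ℕ → ℕ) (hα : ∀ n, 1 ≤ α n ∧ α n ≤ s - 1) (n : ℕ) :
    (α n : ℝ) / (s : ℝ) ^ (∑ k ∈ Finset.range (n + 1), α k)
      ≤ (s - 1 : ℝ) * ((s : ℝ)⁻¹) ^ (n + 1) := by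
  have hs1 : (1 : ℝ) < s := by exact_mod_cast (by omega : 1 < s)
  have h1 : (α n : ℝ) ≤ (s - 1 : ℝ) := by
    have := (hα n).2
    have : (α n : ℝ) ≤ ((s - 1 : ℕ) : ℝ) := by exact_mod_cast this
    rw [Nat.cast_sub (by omega)] at this; simpa using this
  have h2 : (s : ℝ) ^ (n + 1) ≤ (s : ℝ) ^ (∑ k ∈ Finset.range (n + 1), α k) :=
    pow_le_pow_right₀ hs1.le (sum_ge α (fun k => (hα k).1) n)
  rw [div_eq_mul_inv, inv_pow]
  apply mul_le_mul h1 _ (by positivity) (by linarith)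
  exact inv_anti₀ (by positivity) h2

lemma maj_summable (s : ℕ) (hs : 2 < s) :
    Summable (fun n : ℕ => (s - 1 : ℝ) * ((s : ℝ)⁻¹) ^ (n + 1)) := by
  have hs1 : (1 : ℝ) < s := by exact_mod_cast (by omega : 1 < s)
  have : Summable (fun n : ℕ => ((s : ℝ)⁻¹) ^ n) :=
    summable_geometric_of_lt_one (by positivity) (by
      rw [inv_lt_one_iff₀]; right; exact hs1)
  simpa [pow_succ, mul_comm, mul_assoc, mul_left_comm] using (this.mul_left ((s - 1 : ℝ) * (s : ℝ)⁻¹))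

lemma key_summable (s : ℕ) (hs : 2 < s) (α : ℕ → ℕ) (hα : ∀ n, 1 ≤ α n ∧ α n ≤ s - 1) :
    Summable (fun n : ℕ => (α n : ℝ) / (s : ℝ) ^ (∑ k ∈ Finset.range (n + 1), α k)) :=
  Summable.of_nonneg_of_le (fun n => by positivity) (term_le s hs α hα) (maj_summable s hs)

lemma Sset_bounded (s : ℕ) (hs : 2 < s) :
    Sset s ⊆ Set.Icc 0 (∑' n : ℕ, (s - 1 : ℝ) * ((s : ℝ)⁻¹) ^ (n + 1)) := by
  rintro x ⟨α, hα, rfl⟩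
  constructor
  · exact tsum_nonneg fun n => by positivity
  · exact Summable.tsum_le_tsum (term_le s hs α hα) (key_summable s hs α hα) (maj_summable s hs)

lemma subset_union (s : ℕ) (hs : 2 < s) :
    Sset s ⊆ ⋃ a ∈ Finset.Icc 1 (s - 1),
      (fun y : ℝ => (a : ℝ) / (s : ℝ) ^ a + ((s : ℝ) ^ a)⁻¹ * y) '' Sset s := by
  rintro x ⟨α, hα, rfl⟩
  refine Set.mem_iUnion₂.2 ⟨α 0, Finset.mem_Icc.2 ⟨(hα 0).1, (hα 0).2⟩, ?_⟩
  refine ⟨∑' n : ℕ, ((α (n + 1) : ℝ) / (s : ℝ) ^ (∑ k ∈ Finset.range (n + 1), α (k + 1))),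
    ⟨fun n => α (n + 1), fun n => hα (n + 1), rfl⟩, ?_⟩
  have hs0 : (0 : ℝ) < s := by positivity
  beta_reduce
  rw [Summable.tsum_eq_zero_add (key_summable s hs α hα), Finset.sum_range_one]
  congr 1
  rw [← tsum_mul_left]
  apply tsum_congr
  intro n
  have hsum : ∑ k ∈ Finset.range (n + 2), α k
      = (∑ k ∈ Finset.range (n + 1), α (k + 1)) + α 0 := Finset.sum_range_succ' α (n + 1)
  rw [hsum, pow_add]
  field_simp

lemma sum_ratio_lt_one (s : ℕ) (hs : 2 < s) :
    ∑ a ∈ Finset.Icc 1 (s - 1), ((s : ℝ) ^ a)⁻¹ < 1 := by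
  have hs1 : (1 : ℝ) < s := by exact_mod_cast (by omega : 1 < s)
  have hx : (s : ℝ)⁻¹ < 1 := by rw [inv_lt_one_iff₀]; right; exact hs1
  have hx0 : (0 : ℝ) < (s : ℝ)⁻¹ := by positivity
  have hIcc : Finset.Icc 1 (s - 1) = Finset.Ico 1 s := by
    rw [← Finset.Ico_add_one_right_eq_Icc]
    congr 1
    omega
  have h1 : ∑ a ∈ Finset.Icc 1 (s - 1), ((s : ℝ) ^ a)⁻¹
      = (s : ℝ)⁻¹ * ∑ i ∈ Finset.range (s - 1), ((s : ℝ)⁻¹) ^ i := by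
    rw [hIcc, Finset.sum_Ico_eq_sum_range, Finset.mul_sum]
    apply Finset.sum_congr rfl
    intro i _
    rw [← inv_pow, pow_add, pow_one]
  have h2 : ∑ i ∈ Finset.range (s - 1), ((s : ℝ)⁻¹) ^ i ≤ (1 - (s : ℝ)⁻¹)⁻¹ := by
    have hsummable : Summable (fun i : ℕ => ((s : ℝ)⁻¹) ^ i) :=
      summable_geometric_of_lt_one hx0.le hx
    calc _ ≤ ∑' i : ℕ, ((s : ℝ)⁻¹) ^ i :=
          Summable.sum_le_tsum _ (fun i _ => by positivity) hsummable
      _ = (1 - (s : ℝ)⁻¹)⁻¹ := tsum_geometric_of_lt_one hx0.le hx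
  rw [h1]
  have hhalf : (s : ℝ)⁻¹ < 2⁻¹ := by
    have h2s : (2 : ℝ) < s := by exact_mod_cast hs
    simpa using one_div_lt_one_div_of_lt (by norm_num) h2s
  have h3 : (s : ℝ)⁻¹ * (1 - (s : ℝ)⁻¹)⁻¹ < 1 := by
    rw [← div_eq_mul_inv, div_lt_one (by norm_num at hhalf ⊢; linarith)]
    norm_num at hhalf ⊢
    linarith
  calc (s : ℝ)⁻¹ * ∑ i ∈ Finset.range (s - 1), ((s : ℝ)⁻¹) ^ i
      ≤ (s : ℝ)⁻¹ * (1 - (s : ℝ)⁻¹)⁻¹ := by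
        apply mul_le_mul_of_nonneg_left h2 hx0.le
    _ < 1 := h3

/-- For an integer `s > 2`, the set `S` is nowhere dense in `ℝ`. -/
theorem stmt3 (s : ℕ) (hs : 2 < s) : interior (closure (Sset s)) = ∅ := by
  set C := closure (Sset s) with hC
  set M : ℝ := ∑' n : ℕ, (s - 1 : ℝ) * ((s : ℝ)⁻¹) ^ (n + 1) with hM
  have hCsub : C ⊆ Set.Icc 0 M := closure_minimal (Sset_bounded s hs) isClosed_Icc
  have hCcomp : IsCompact C := isCompact_Icc.of_isClosed_subset isClosed_closure hCsub
  have himg : ∀ a : ℕ, volume ((fun y : ℝ => (a : ℝ) / (s : ℝ) ^ a + ((s : ℝ) ^ a)⁻¹ * y) '' C)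
      = ENNReal.ofReal (((s : ℝ) ^ a)⁻¹) * volume C := by
    intro a
    have heq : (fun y : ℝ => (a : ℝ) / (s : ℝ) ^ a + ((s : ℝ) ^ a)⁻¹ * y) '' C
        = (fun y : ℝ => y + (a : ℝ) / (s : ℝ) ^ a) '' (((s : ℝ) ^ a)⁻¹ • C) := by
      rw [← Set.image_smul, Set.image_image]
      apply Set.image_congr
      intro y _
      simp [smul_eq_mul, add_comm]
    rw [heq, Set.image_add_right, measure_preimage_add_right]
    have := Measure.addHaar_smul_of_nonneg (volume : Measure ℝ)
      (show (0:ℝ) ≤ ((s : ℝ) ^ a)⁻¹ by positivity) C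
    simpa using this
  have hcov : C ⊆ ⋃ a ∈ Finset.Icc 1 (s - 1),
      (fun y : ℝ => (a : ℝ) / (s : ℝ) ^ a + ((s : ℝ) ^ a)⁻¹ * y) '' C := by
    apply closure_minimal
    · refine (subset_union s hs).trans ?_
      apply Set.iUnion₂_mono
      intro a _
      exact Set.image_mono subset_closure
    · apply Set.Finite.isClosed_biUnion (Finset.finite_toSet _)
      intro a _
      exact (hCcomp.image (by continuity)).isClosed
  have hmeas : volume C ≤ ENNReal.ofReal (∑ a ∈ Finset.Icc 1 (s - 1), ((s : ℝ) ^ a)⁻¹)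
      * volume C := by
    calc volume C ≤ ∑ a ∈ Finset.Icc 1 (s - 1),
          volume ((fun y : ℝ => (a : ℝ) / (s : ℝ) ^ a + ((s : ℝ) ^ a)⁻¹ * y) '' C) :=
        (measure_mono hcov).trans (measure_biUnion_finset_le _ _)
      _ = ∑ a ∈ Finset.Icc 1 (s - 1), ENNReal.ofReal (((s : ℝ) ^ a)⁻¹) * volume C := by
        simp_rw [himg]
      _ = (∑ a ∈ Finset.Icc 1 (s - 1), ENNReal.ofReal (((s : ℝ) ^ a)⁻¹)) * volume C := by
        rw [Finset.sum_mul]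
      _ = _ := by
        rw [ENNReal.ofReal_sum_of_nonneg (fun a _ => by positivity)]
  have htop : volume C ≠ ⊤ := hCcomp.measure_lt_top.ne
  have hzero : volume C = 0 := by
    by_contra h0
    have hlt : ENNReal.ofReal (∑ a ∈ Finset.Icc 1 (s - 1), ((s : ℝ) ^ a)⁻¹) * volume C
        < 1 * volume C := by
      rw [ENNReal.mul_lt_mul_iff_left h0 htop]
      exact lt_of_lt_of_le (ENNReal.ofReal_lt_one.2 (sum_ratio_lt_one s hs)) le_rfl
    rw [one_mul] at hlt
    exact absurd (lt_of_le_of_lt hmeas hlt) (lt_irrefl _)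
  by_contra h
  have hne : (interior C).Nonempty := Set.nonempty_iff_ne_empty.2 h
  have := Measure.measure_pos_of_nonempty_interior (μ := (volume : Measure ℝ)) hne
  rw [hzero] at this
  exact lt_irrefl _ this
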